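/- Hessian determinant of the β-plane dispersion relation: for every nonzero ξ ∈ ℝ², the function L(ξ) = ξ₁/|ξ|² is smooth near ξ and the determinant of its Hessian matrix satisfies det D²L(ξ) = −4 |ξ|^{−6}. In particular the Hessian is everywhere non-degenerate on ℝ² \ {0}. -/

import Mathlib

open ContinuousLinearMap in
theorem myDiv {E : Type*} [NormedAddCommGroup E] [NormedSpace ℝ E]
    {c d : E → ℝ} {c' d' : E →L[ℝ] ℝ} {x : E}
    (hc : HasFDerivAt c c' x) (hd : HasFDerivAt d d' x) (hx : d x ≠ 0) :
    HasFDerivAt (fun y => c y / d y) (((d x) ^ 2)⁻¹ • ((d x) • c' - (c x) • d')) x := by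
  have h1 : HasFDerivAt (fun y => (d y)⁻¹)
      ((-mulLeftRight ℝ ℝ (d x)⁻¹ (d x)⁻¹).comp d') x :=
    (hasFDerivAt_inv' hx).comp x hd
  have h2 := hc.mul h1
  simp only [div_eq_mul_inv]
  refine HasFDerivAt.congr_fderiv h2 ?_
  ext v
  simp [mulLeftRight_apply]
  field_simp
  ring

/-- The β-plane dispersion relation `L(ξ) = ξ₁/|ξ|²`. -/
noncomputable def Ldisp (x : EuclideanSpace ℝ (Fin 2)) : ℝ := x 0 / ‖x‖ ^ 2

section helpers
variable {x : EuclideanSpace ℝ (Fin 2)}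

theorem hproj (i : Fin 2) (x : EuclideanSpace ℝ (Fin 2)) :
    HasFDerivAt (fun y : EuclideanSpace ℝ (Fin 2) => y i)
      (EuclideanSpace.proj (𝕜 := ℝ) i) x :=
  (EuclideanSpace.proj (𝕜 := ℝ) i).hasFDerivAt

theorem norm_sq_eq (x : EuclideanSpace ℝ (Fin 2)) : ‖x‖ ^ 2 = x 0 * x 0 + x 1 * x 1 := by
  rw [EuclideanSpace.norm_eq, Real.sq_sqrt (by positivity)]
  simp [Fin.sum_univ_two, Real.norm_eq_abs, sq, abs_mul_abs_self]

theorem hQ (x : EuclideanSpace ℝ (Fin 2)) :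
    HasFDerivAt (fun y : EuclideanSpace ℝ (Fin 2) => y 0 * y 0 + y 1 * y 1)
      ((x 0 • EuclideanSpace.proj (𝕜 := ℝ) 0 + x 0 • EuclideanSpace.proj (𝕜 := ℝ) 0)
        + (x 1 • EuclideanSpace.proj (𝕜 := ℝ) 1 + x 1 • EuclideanSpace.proj (𝕜 := ℝ) 1)) x :=
  ((hproj 0 x).mul (hproj 0 x)).add ((hproj 1 x).mul (hproj 1 x))

theorem L_fderiv (x : EuclideanSpace ℝ (Fin 2)) (hx : x 0 * x 0 + x 1 * x 1 ≠ 0)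
    (v : EuclideanSpace ℝ (Fin 2)) :
    fderiv ℝ Ldisp x v =
      ((x 1 * x 1 - x 0 * x 0) * v 0 - 2 * x 0 * x 1 * v 1) /
        ((x 0 * x 0 + x 1 * x 1) * (x 0 * x 0 + x 1 * x 1)) := by
  have hL : Ldisp = fun y : EuclideanSpace ℝ (Fin 2) => y 0 / (y 0 * y 0 + y 1 * y 1) := by
    funext y; simp [Ldisp, norm_sq_eq]
  have h := myDiv (hproj 0 x) (hQ x) hx
  rw [hL, h.fderiv]
  simp only [ContinuousLinearMap.smul_apply, ContinuousLinearMap.sub_apply,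
    ContinuousLinearMap.add_apply, PiLp.proj_apply, smul_eq_mul]
  field_simp
  ring

end helpers

theorem hessian_det_dispersion (ξ : EuclideanSpace ℝ (Fin 2)) (hξ : ξ ≠ 0) :
    ContDiffAt ℝ (⊤ : ℕ∞) Ldisp ξ ∧
      Matrix.det
          (Matrix.of fun i j : Fin 2 =>
            fderiv ℝ (fun x => fderiv ℝ Ldisp x (EuclideanSpace.single j 1)) ξ
              (EuclideanSpace.single i 1)) =
        -4 / ‖ξ‖ ^ 6 := by
  have hnorm : ‖ξ‖ ≠ 0 := norm_ne_zero_iff.2 hξ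
  have hQξ : ξ 0 * ξ 0 + ξ 1 * ξ 1 ≠ 0 := by rw [← norm_sq_eq]; positivity
  constructor
  · have h1 : ContDiffAt ℝ (⊤ : ℕ∞) (fun x : EuclideanSpace ℝ (Fin 2) => x 0) ξ :=
      (EuclideanSpace.proj (𝕜 := ℝ) (0 : Fin 2)).contDiff.contDiffAt
    have h2 : ContDiffAt ℝ (⊤ : ℕ∞) (fun x : EuclideanSpace ℝ (Fin 2) => ‖x‖ ^ 2) ξ :=
      (contDiff_norm_sq ℝ).contDiffAt
    exact h1.div h2 (pow_ne_zero 2 hnorm)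
  · -- open set where Q ≠ 0
    have hopen : IsOpen {x : EuclideanSpace ℝ (Fin 2) | x 0 * x 0 + x 1 * x 1 ≠ 0} := by
      have hc : Continuous fun x : EuclideanSpace ℝ (Fin 2) => x 0 * x 0 + x 1 * x 1 :=
        ((EuclideanSpace.proj (𝕜 := ℝ) (0 : Fin 2)).continuous.mul
            (EuclideanSpace.proj (𝕜 := ℝ) (0 : Fin 2)).continuous).add
          ((EuclideanSpace.proj (𝕜 := ℝ) (1 : Fin 2)).continuous.mul
            (EuclideanSpace.proj (𝕜 := ℝ) (1 : Fin 2)).continuous)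
      exact hc.isOpen_preimage {y | y ≠ 0} isOpen_ne
    have hmem : {x : EuclideanSpace ℝ (Fin 2) | x 0 * x 0 + x 1 * x 1 ≠ 0} ∈ nhds ξ :=
      hopen.mem_nhds hQξ
    have hev0 : (fun x => fderiv ℝ Ldisp x (EuclideanSpace.single 0 1)) =ᶠ[nhds ξ]
        (fun x : EuclideanSpace ℝ (Fin 2) =>
          (x 1 * x 1 - x 0 * x 0) / ((x 0 * x 0 + x 1 * x 1) * (x 0 * x 0 + x 1 * x 1))) := by
      filter_upwards [hmem] with x hx
      rw [L_fderiv x hx]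
      simp [EuclideanSpace.single_apply]
    have hev1 : (fun x => fderiv ℝ Ldisp x (EuclideanSpace.single 1 1)) =ᶠ[nhds ξ]
        (fun x : EuclideanSpace ℝ (Fin 2) =>
          (-(2 * x 0 * x 1)) / ((x 0 * x 0 + x 1 * x 1) * (x 0 * x 0 + x 1 * x 1))) := by
      filter_upwards [hmem] with x hx
      rw [L_fderiv x hx]
      simp [EuclideanSpace.single_apply]
    -- derivative of explicit quotient 0
    have hd0 : HasFDerivAt
        (fun x : EuclideanSpace ℝ (Fin 2) =>
          (x 1 * x 1 - x 0 * x 0) / ((x 0 * x 0 + x 1 * x 1) * (x 0 * x 0 + x 1 * x 1)))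
        _ ξ :=
      myDiv (((hproj 1 ξ).mul (hproj 1 ξ)).sub ((hproj 0 ξ).mul (hproj 0 ξ)))
        ((hQ ξ).mul (hQ ξ)) (mul_ne_zero hQξ hQξ)
    have hd1 : HasFDerivAt
        (fun x : EuclideanSpace ℝ (Fin 2) =>
          (-(2 * x 0 * x 1)) / ((x 0 * x 0 + x 1 * x 1) * (x 0 * x 0 + x 1 * x 1)))
        _ ξ :=
      myDiv (((hasFDerivAt_const (2:ℝ) ξ).mul (hproj 0 ξ)).mul (hproj 1 ξ)).neg
        ((hQ ξ).mul (hQ ξ)) (mul_ne_zero hQξ hQξ)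
    set a := ξ 0 with ha
    set b := ξ 1 with hb
    have hr : a * a + b * b ≠ 0 := hQξ
    have E00 : fderiv ℝ (fun x => fderiv ℝ Ldisp x (EuclideanSpace.single 0 1)) ξ
        (EuclideanSpace.single 0 1) = (2*a^3 - 6*a*b^2) / (a*a+b*b)^3 := by
      rw [hev0.fderiv_eq, hd0.fderiv]
      simp [EuclideanSpace.single_apply, ← ha, ← hb]
      field_simp
      ring
    have E10 : fderiv ℝ (fun x => fderiv ℝ Ldisp x (EuclideanSpace.single 0 1)) ξ
        (EuclideanSpace.single 1 1) = (6*a^2*b - 2*b^3) / (a*a+b*b)^3 := by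
      rw [hev0.fderiv_eq, hd0.fderiv]
      simp [EuclideanSpace.single_apply, ← ha, ← hb]
      field_simp
      ring
    have E01 : fderiv ℝ (fun x => fderiv ℝ Ldisp x (EuclideanSpace.single 1 1)) ξ
        (EuclideanSpace.single 0 1) = (6*a^2*b - 2*b^3) / (a*a+b*b)^3 := by
      rw [hev1.fderiv_eq, hd1.fderiv]
      simp [EuclideanSpace.single_apply, ← ha, ← hb]
      field_simp
      ring
    have E11 : fderiv ℝ (fun x => fderiv ℝ Ldisp x (EuclideanSpace.single 1 1)) ξ
        (EuclideanSpace.single 1 1) = (6*a*b^2 - 2*a^3) / (a*a+b*b)^3 := by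
      rw [hev1.fderiv_eq, hd1.fderiv]
      simp [EuclideanSpace.single_apply, ← ha, ← hb]
      field_simp
      ring
    have h6 : ‖ξ‖ ^ 6 = (a*a+b*b)^3 := by
      rw [show (6:ℕ) = 2*3 from rfl, pow_mul, norm_sq_eq]
    rw [Matrix.det_fin_two]
    simp only [Matrix.of_apply]
    rw [E00, E01, E10, E11, h6]
    have hr2 : a ^ 2 + b ^ 2 ≠ 0 := by rw [sq, sq]; exact hr
    field_simp
    ring
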